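/- Let k be a field, A a k-algebra, and R ∈ A⊗A a unitary invertible solution of the pentagon equation. Then the coefficient spaces P = R_(l) and H = R_(r) are unital subalgebras of A, R ∈ P⊗H, and the maps Δ_r(a) = R⁻¹(1_A⊗a)R and Δ_l(a) = R(a⊗1_A)R⁻¹ satisfy Δ_r(P) ⊆ P⊗P and Δ_l(H) ⊆ H⊗H. -/

import Mathlib

open TensorProduct

set_option maxHeartbeats 1000000
set_option synthInstance.maxHeartbeats 200000

namespace PentagonPaper

section Pentagon

variable (k : Type*) [Field k] (A : Type*) [Ring A] [Algebra k A]

/-- `x ⊗ y ↦ x ⊗ y ⊗ 1` -/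
noncomputable def leg12 : A ⊗[k] A →ₐ[k] A ⊗[k] (A ⊗[k] A) :=
  Algebra.TensorProduct.map (AlgHom.id k A) Algebra.TensorProduct.includeLeft

/-- `x ⊗ y ↦ x ⊗ 1 ⊗ y` -/
noncomputable def leg13 : A ⊗[k] A →ₐ[k] A ⊗[k] (A ⊗[k] A) :=
  Algebra.TensorProduct.map (AlgHom.id k A) Algebra.TensorProduct.includeRight

/-- `x ⊗ y ↦ 1 ⊗ x ⊗ y` -/
noncomputable def leg23 : A ⊗[k] A →ₐ[k] A ⊗[k] (A ⊗[k] A) :=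
  Algebra.TensorProduct.includeRight

variable {k A}

/-- The pentagon equation `R¹²R¹³R²³ = R²³R¹²`. -/
def IsPentagon (R : A ⊗[k] A) : Prop :=
  leg12 k A R * leg13 k A R * leg23 k A R = leg23 k A R * leg12 k A R

/-- `φ ↦ (id ⊗ φ)(R)`, i.e. the map sending a functional to the corresponding
left coefficient of `R`. -/
noncomputable def lCoefMap (R : A ⊗[k] A) : Module.Dual k A →ₗ[k] A :=
  (TensorProduct.rid k A).toLinearMap ∘ₗ LinearMap.applyₗ R ∘ₗ LinearMap.lTensorHom A

/-- `φ ↦ (φ ⊗ id)(R)`, i.e. the map sending a functional to the corresponding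
right coefficient of `R`. -/
noncomputable def rCoefMap (R : A ⊗[k] A) : Module.Dual k A →ₗ[k] A :=
  (TensorProduct.lid k A).toLinearMap ∘ₗ LinearMap.applyₗ R ∘ₗ LinearMap.rTensorHom A

/-- The space `R_(l)` of left coefficients of `R`. -/
noncomputable def lCoefs (R : A ⊗[k] A) : Submodule k A := LinearMap.range (lCoefMap R)

/-- The space `R_(r)` of right coefficients of `R`. -/
noncomputable def rCoefs (R : A ⊗[k] A) : Submodule k A := LinearMap.range (rCoefMap R)

/-- `R` is unitary if `1 ∈ R_(l) ∩ R_(r)`. -/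
def IsUnitary (R : A ⊗[k] A) : Prop := (1 : A) ∈ lCoefs R ∧ (1 : A) ∈ rCoefs R

/-- The length `l(R)`: the minimal `m` such that `R = ∑_{i=1}^m aᵢ ⊗ bᵢ`. -/
noncomputable def length (R : A ⊗[k] A) : ℕ :=
  sInf {m : ℕ | ∃ a b : Fin m → A, R = ∑ i, a i ⊗ₜ[k] b i}

/-- The left `R`-coinvariants `A^{R,l} = {a | R(a ⊗ 1) = a ⊗ 1}`. -/
noncomputable def lCoinv (R : A ⊗[k] A) : Submodule k A where
  carrier := {a : A | R * (a ⊗ₜ[k] (1 : A)) = a ⊗ₜ[k] (1 : A)}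
  add_mem' := by
    intro a b ha hb
    simp only [Set.mem_setOf_eq, TensorProduct.add_tmul, mul_add] at *
    rw [ha, hb]
  zero_mem' := by simp
  smul_mem' := by
    intro c a ha
    simp only [Set.mem_setOf_eq] at *
    rw [← TensorProduct.smul_tmul', mul_smul_comm, ha]

/-- The right `R`-coinvariants `A^{R,r} = {a | (1 ⊗ a)R = 1 ⊗ a}`. -/
noncomputable def rCoinv (R : A ⊗[k] A) : Submodule k A where
  carrier := {a : A | ((1 : A) ⊗ₜ[k] a) * R = (1 : A) ⊗ₜ[k] a}
  add_mem' := by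
    intro a b ha hb
    simp only [Set.mem_setOf_eq, TensorProduct.tmul_add, add_mul] at *
    rw [ha, hb]
  zero_mem' := by simp
  smul_mem' := by
    intro c a ha
    simp only [Set.mem_setOf_eq, TensorProduct.tmul_smul, smul_mul_assoc] at *
    rw [ha]

/-- The comultiplication `Δ_r : a ↦ R⁻¹(1 ⊗ a)R` on `A`. -/
noncomputable def deltaR (R : A ⊗[k] A) : A →ₗ[k] A ⊗[k] A where
  toFun a := Ring.inverse R * ((1 : A) ⊗ₜ[k] a) * R
  map_add' a b := by simp [TensorProduct.tmul_add, mul_add, add_mul]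
  map_smul' c a := by simp [TensorProduct.tmul_smul, mul_smul_comm, smul_mul_assoc]

/-- The comultiplication `Δ_l : a ↦ R(a ⊗ 1)R⁻¹` on `A`. -/
noncomputable def deltaL (R : A ⊗[k] A) : A →ₗ[k] A ⊗[k] A where
  toFun a := R * (a ⊗ₜ[k] (1 : A)) * Ring.inverse R
  map_add' a b := by simp [TensorProduct.add_tmul, mul_add, add_mul]
  map_smul' c a := by
    simp only [RingHom.id_apply]
    rw [← TensorProduct.smul_tmul', mul_smul_comm, smul_mul_assoc]

end Pentagon


section Aux
variable {k : Type*} [Field k] {A : Type*} [Ring A] [Algebra k A]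

lemma lCoefMap_tmul (a b : A) (φ : Module.Dual k A) :
    lCoefMap (k := k) (a ⊗ₜ b) φ = φ b • a := by
  simp [lCoefMap, LinearMap.lTensorHom]

lemma rCoefMap_tmul (a b : A) (φ : Module.Dual k A) :
    rCoefMap (k := k) (a ⊗ₜ b) φ = φ a • b := by
  simp [rCoefMap, LinearMap.rTensorHom]

lemma lCoefMap_add (R S : A ⊗[k] A) (φ : Module.Dual k A) :
    lCoefMap (R + S) φ = lCoefMap R φ + lCoefMap S φ := by
  simp [lCoefMap]

lemma rCoefMap_add (R S : A ⊗[k] A) (φ : Module.Dual k A) :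
    rCoefMap (R + S) φ = rCoefMap R φ + rCoefMap S φ := by
  simp [rCoefMap]

lemma lCoefMap_sum {ι : Type*} (s : Finset ι) (f : ι → A ⊗[k] A) (φ : Module.Dual k A) :
    lCoefMap (∑ i ∈ s, f i) φ = ∑ i ∈ s, lCoefMap (f i) φ := by
  classical
  induction s using Finset.induction with
  | empty => simp [lCoefMap]
  | insert _ _ h ih => simp [Finset.sum_insert h, lCoefMap_add, ih]

lemma rCoefMap_sum {ι : Type*} (s : Finset ι) (f : ι → A ⊗[k] A) (φ : Module.Dual k A) :
    rCoefMap (∑ i ∈ s, f i) φ = ∑ i ∈ s, rCoefMap (f i) φ := by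
  classical
  induction s using Finset.induction with
  | empty => simp [rCoefMap]
  | insert _ _ h ih => simp [Finset.sum_insert h, rCoefMap_add, ih]

/-- dual family for a linearly independent family -/
lemma exists_dual_family {ι : Type*} [DecidableEq ι] (v : ι → A) (hv : LinearIndependent k v) :
    ∃ f : ι → Module.Dual k A, ∀ i j, f i (v j) = if j = i then 1 else 0 := by
  classical
  set p := Submodule.span k (Set.range v)
  obtain ⟨q, hq⟩ := Submodule.exists_isCompl p
  let B : Module.Basis ι k p := Module.Basis.span hv
  refine ⟨fun i => (B.coord i) ∘ₗ (p.projectionOnto q hq), fun i j => ?_⟩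
  have hvj : v j ∈ p := Submodule.subset_span ⟨j, rfl⟩
  have h1 : (p.projectionOnto q hq) (v j) = ⟨v j, hvj⟩ := by
    have := Submodule.linearProjOfIsCompl_apply_left hq ⟨v j, hvj⟩
    simpa using this
  have h2 : (⟨v j, hvj⟩ : p) = B j := by
    ext; exact congrArg Subtype.val (Module.Basis.span_apply hv j).symm
  simp only [LinearMap.comp_apply, h1, h2, Module.Basis.coord_apply, Module.Basis.repr_self]
  simp [Finsupp.single_apply]

/-- rewrite a representation so that the right-hand components are linearly independent -/
lemma toLiRight (n : ℕ) (a b : Fin n → A) :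
    ∃ (m : ℕ) (u v : Fin m → A), (∑ i, a i ⊗ₜ[k] b i) = ∑ j, u j ⊗ₜ[k] v j ∧
      LinearIndependent k v ∧ ∀ j, u j ∈ Submodule.span k (Set.range a) := by
  classical
  set W := Submodule.span k (Set.range b) with hW
  haveI : FiniteDimensional k W := FiniteDimensional.span_of_finite k (Set.finite_range b)
  let c := Module.finBasis k W
  have hb : ∀ i, b i ∈ W := fun i => Submodule.subset_span ⟨i, rfl⟩
  refine ⟨Module.finrank k W, fun j => ∑ i, (c.repr ⟨b i, hb i⟩ j) • a i,
    fun j => (c j : A), ?_, ?_, ?_⟩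
  · have key : ∀ i, b i = ∑ j, (c.repr ⟨b i, hb i⟩) j • (c j : A) := by
      intro i
      have h := congrArg (Subtype.val) (c.sum_repr ⟨b i, hb i⟩)
      simp only [Submodule.coe_sum, Submodule.coe_smul] at h
      exact h.symm
    calc ∑ i, a i ⊗ₜ[k] b i
        = ∑ i, ∑ j, (c.repr ⟨b i, hb i⟩) j • (a i ⊗ₜ[k] (c j : A)) := by
          refine Finset.sum_congr rfl fun i _ => ?_
          simp only [← tmul_smul, ← tmul_sum]
          exact congrArg (fun z => a i ⊗ₜ[k] z) (key i)
      _ = ∑ j, ∑ i, (c.repr ⟨b i, hb i⟩) j • (a i ⊗ₜ[k] (c j : A)) := Finset.sum_comm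
      _ = ∑ j, (∑ i, (c.repr ⟨b i, hb i⟩) j • a i) ⊗ₜ[k] (c j : A) := by
          refine Finset.sum_congr rfl fun j _ => ?_
          rw [sum_tmul]
          simp [TensorProduct.smul_tmul']
  · have := c.linearIndependent.map' W.subtype W.ker_subtype
    exact this
  · intro j
    exact Submodule.sum_mem _ fun i _ => Submodule.smul_mem _ _ (Submodule.subset_span ⟨i, rfl⟩)

/-- rewrite a representation so that the left-hand components are linearly independent -/
lemma toLiLeft (n : ℕ) (a b : Fin n → A) :
    ∃ (m : ℕ) (u v : Fin m → A), (∑ i, a i ⊗ₜ[k] b i) = ∑ j, u j ⊗ₜ[k] v j ∧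
      LinearIndependent k u ∧ ∀ j, u j ∈ Submodule.span k (Set.range a) := by
  classical
  set W := Submodule.span k (Set.range a) with hW
  haveI : FiniteDimensional k W := FiniteDimensional.span_of_finite k (Set.finite_range a)
  let c := Module.finBasis k W
  have ha : ∀ i, a i ∈ W := fun i => Submodule.subset_span ⟨i, rfl⟩
  refine ⟨Module.finrank k W, fun j => (c j : A),
    fun j => ∑ i, (c.repr ⟨a i, ha i⟩ j) • b i, ?_, ?_, ?_⟩
  · have key : ∀ i, a i = ∑ j, (c.repr ⟨a i, ha i⟩) j • (c j : A) := by
      intro i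
      have h := congrArg (Subtype.val) (c.sum_repr ⟨a i, ha i⟩)
      simp only [Submodule.coe_sum, Submodule.coe_smul] at h
      exact h.symm
    calc ∑ i, a i ⊗ₜ[k] b i
        = ∑ i, ∑ j, (c.repr ⟨a i, ha i⟩) j • ((c j : A) ⊗ₜ[k] b i) := by
          refine Finset.sum_congr rfl fun i _ => ?_
          simp only [TensorProduct.smul_tmul', ← sum_tmul]
          exact congrArg (fun z => z ⊗ₜ[k] b i) (key i)
      _ = ∑ j, ∑ i, (c.repr ⟨a i, ha i⟩) j • ((c j : A) ⊗ₜ[k] b i) := Finset.sum_comm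
      _ = ∑ j, (c j : A) ⊗ₜ[k] (∑ i, (c.repr ⟨a i, ha i⟩) j • b i) := by
          refine Finset.sum_congr rfl fun j _ => ?_
          rw [tmul_sum]
          simp [tmul_smul]
  · exact c.linearIndependent.map' W.subtype W.ker_subtype
  · intro j; exact (c j).2

lemma lCoefMap_rep (m : ℕ) (u v : Fin m → A) (φ : Module.Dual k A) :
    lCoefMap (∑ i, u i ⊗ₜ[k] v i) φ = ∑ i, φ (v i) • u i := by
  rw [lCoefMap_sum]
  exact Finset.sum_congr rfl fun i _ => lCoefMap_tmul _ _ _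

lemma rCoefMap_rep (m : ℕ) (u v : Fin m → A) (φ : Module.Dual k A) :
    rCoefMap (∑ i, u i ⊗ₜ[k] v i) φ = ∑ i, φ (u i) • v i := by
  rw [rCoefMap_sum]
  exact Finset.sum_congr rfl fun i _ => rCoefMap_tmul _ _ _

/-- every element of `A ⊗ A` has a representation with left components in `lCoefs` and
right components in `rCoefs` -/
lemma exists_rep (t : A ⊗[k] A) :
    ∃ (n : ℕ) (a b : Fin n → A), t = ∑ i, a i ⊗ₜ[k] b i ∧
      (∀ i, a i ∈ lCoefs t) ∧ (∀ i, b i ∈ rCoefs t) := by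
  classical
  obtain ⟨S, hS⟩ := TensorProduct.exists_finset t
  set n₀ := S.card with hn
  set e : Fin S.card ≃ S := S.equivFin.symm with he
  set a₀ : Fin n₀ → A := fun i => ((e i : A × A)).1 with ha₀
  set b₀ : Fin n₀ → A := fun i => ((e i : A × A)).2 with hb₀
  have h₀ : t = ∑ i, a₀ i ⊗ₜ[k] b₀ i := by
    rw [hS, ← Finset.sum_attach S (fun p => p.1 ⊗ₜ[k] p.2)]
    exact (Equiv.sum_comp e (fun p : S => (p : A × A).1 ⊗ₜ[k] (p : A × A).2)).symm
  obtain ⟨m, u, v, h1, hv, hu_span⟩ := toLiRight (k := k) n₀ a₀ b₀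
  have ht1 : t = ∑ j, u j ⊗ₜ[k] v j := h₀.trans h1
  have hu_mem : ∀ j, u j ∈ lCoefs t := by
    obtain ⟨f, hf⟩ := exists_dual_family v hv
    intro j
    refine ⟨f j, ?_⟩
    rw [ht1, lCoefMap_rep]
    simp only [hf]
    simp [ite_smul]
  obtain ⟨m', u', v', h2, hu', hspan'⟩ := toLiLeft (k := k) m u v
  have ht2 : t = ∑ j, u' j ⊗ₜ[k] v' j := ht1.trans h2
  have hu'_mem : ∀ j, u' j ∈ lCoefs t := by
    intro j
    have hle : Submodule.span k (Set.range u) ≤ lCoefs t := by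
      rw [Submodule.span_le]
      rintro _ ⟨i, rfl⟩
      exact hu_mem i
    exact hle (hspan' j)
  have hv'_mem : ∀ i, v' i ∈ rCoefs t := by
    obtain ⟨g, hg⟩ := exists_dual_family u' hu'
    intro i
    refine ⟨g i, ?_⟩
    rw [ht2, rCoefMap_rep]
    simp only [hg]
    simp [ite_smul]
  exact ⟨m', u', v', ht2, hu'_mem, hv'_mem⟩

end Aux

section Core
variable {k : Type*} [Field k] {A : Type*} [Ring A] [Algebra k A]

lemma leg12_tmul (a b : A) : leg12 k A (a ⊗ₜ[k] b) = a ⊗ₜ[k] (b ⊗ₜ[k] (1:A)) := rfl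
lemma leg13_tmul (a b : A) : leg13 k A (a ⊗ₜ[k] b) = a ⊗ₜ[k] ((1:A) ⊗ₜ[k] b) := rfl
lemma leg23_tmul (a b : A) : leg23 k A (a ⊗ₜ[k] b) = (1:A) ⊗ₜ[k] (a ⊗ₜ[k] b) := rfl

/-- apply `φ` to leg 2 and `ψ` to leg 3 -/
noncomputable def fMap (φ ψ : Module.Dual k A) : A ⊗[k] (A ⊗[k] A) →ₗ[k] A :=
  (TensorProduct.rid k A).toLinearMap ∘ₗ LinearMap.lTensor A
    ((TensorProduct.lid k k).toLinearMap ∘ₗ TensorProduct.map φ ψ)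

lemma fMap_tmul (φ ψ : Module.Dual k A) (x y z : A) :
    fMap φ ψ (x ⊗ₜ[k] (y ⊗ₜ[k] z)) = (φ y * ψ z) • x := by
  simp [fMap, smul_smul]

/-- apply `φ` to leg 1 and `ψ` to leg 2 -/
noncomputable def gMap (φ ψ : Module.Dual k A) : A ⊗[k] (A ⊗[k] A) →ₗ[k] A :=
  (TensorProduct.lid k A).toLinearMap ∘ₗ TensorProduct.map φ
    ((TensorProduct.lid k A).toLinearMap ∘ₗ LinearMap.rTensor A ψ)

lemma gMap_tmul (φ ψ : Module.Dual k A) (x y z : A) :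
    gMap φ ψ (x ⊗ₜ[k] (y ⊗ₜ[k] z)) = (φ x * ψ y) • z := by
  simp [gMap, smul_smul, mul_comm]

/-- apply `φ` to leg 3 -/
noncomputable def kMap (φ : Module.Dual k A) : A ⊗[k] (A ⊗[k] A) →ₗ[k] A ⊗[k] A :=
  LinearMap.lTensor A ((TensorProduct.rid k A).toLinearMap ∘ₗ LinearMap.lTensor A φ)

lemma kMap_tmul (φ : Module.Dual k A) (x y z : A) :
    kMap φ (x ⊗ₜ[k] (y ⊗ₜ[k] z)) = φ z • (x ⊗ₜ[k] y) := by
  simp [kMap, tmul_smul]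

/-- apply `φ` to leg 1 -/
noncomputable def k'Map (φ : Module.Dual k A) : A ⊗[k] (A ⊗[k] A) →ₗ[k] A ⊗[k] A :=
  (TensorProduct.lid k (A ⊗[k] A)).toLinearMap ∘ₗ LinearMap.rTensor (A ⊗[k] A) φ

lemma k'Map_tmul (φ : Module.Dual k A) (x : A) (m : A ⊗[k] A) :
    k'Map φ (x ⊗ₜ[k] m) = φ x • m := by
  simp [k'Map]

lemma fMap_mul12_13 (φ ψ : Module.Dual k A) (u v : A ⊗[k] A) :
    fMap φ ψ (leg12 k A u * leg13 k A v) = lCoefMap u φ * lCoefMap v ψ := by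
  induction u using TensorProduct.induction_on with
  | zero => simp [lCoefMap]
  | add u₁ u₂ h₁ h₂ => simp [map_add, add_mul, lCoefMap_add, h₁, h₂]
  | tmul a b =>
    induction v using TensorProduct.induction_on with
    | zero => simp [lCoefMap]
    | add v₁ v₂ h₁ h₂ => simp [map_add, mul_add, lCoefMap_add, h₁, h₂]
    | tmul c d =>
      rw [leg12_tmul, leg13_tmul, Algebra.TensorProduct.tmul_mul_tmul,
        Algebra.TensorProduct.tmul_mul_tmul, one_mul, mul_one, fMap_tmul,
        lCoefMap_tmul, lCoefMap_tmul]
      rw [smul_mul_assoc, mul_smul_comm, mul_smul]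

lemma gMap_mul13_23 (φ ψ : Module.Dual k A) (u v : A ⊗[k] A) :
    gMap φ ψ (leg13 k A u * leg23 k A v) = rCoefMap u φ * rCoefMap v ψ := by
  induction u using TensorProduct.induction_on with
  | zero => simp [rCoefMap]
  | add u₁ u₂ h₁ h₂ => simp [map_add, add_mul, rCoefMap_add, h₁, h₂]
  | tmul a b =>
    induction v using TensorProduct.induction_on with
    | zero => simp [rCoefMap]
    | add v₁ v₂ h₁ h₂ => simp [map_add, mul_add, rCoefMap_add, h₁, h₂]
    | tmul c d =>
      rw [leg13_tmul, leg23_tmul, Algebra.TensorProduct.tmul_mul_tmul,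
        Algebra.TensorProduct.tmul_mul_tmul, one_mul, mul_one, gMap_tmul,
        rCoefMap_tmul, rCoefMap_tmul]
      rw [smul_mul_assoc, mul_smul_comm, mul_smul]

lemma fMap_mid (φ ψ : Module.Dual k A) (u w : A ⊗[k] A) :
    ∃ χ : Module.Dual k A, ∀ v : A ⊗[k] A,
      fMap φ ψ (leg23 k A u * leg12 k A v * leg23 k A w) = lCoefMap v χ := by
  induction u using TensorProduct.induction_on with
  | zero => exact ⟨0, fun v => by simp [lCoefMap]⟩
  | add u₁ u₂ h₁ h₂ =>
    obtain ⟨χ₁, hχ₁⟩ := h₁; obtain ⟨χ₂, hχ₂⟩ := h₂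
    exact ⟨χ₁ + χ₂, fun v => by
      simp [map_add, add_mul, hχ₁ v, hχ₂ v]⟩
  | tmul p q =>
    induction w using TensorProduct.induction_on with
    | zero => exact ⟨0, fun v => by simp [lCoefMap]⟩
    | add w₁ w₂ h₁ h₂ =>
      obtain ⟨χ₁, hχ₁⟩ := h₁; obtain ⟨χ₂, hχ₂⟩ := h₂
      exact ⟨χ₁ + χ₂, fun v => by
        simp [map_add, mul_add, hχ₁ v, hχ₂ v]⟩
    | tmul s t =>
      refine ⟨ψ (q * t) • (φ ∘ₗ ((LinearMap.mulRight k s) ∘ₗ (LinearMap.mulLeft k p))),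
        fun v => ?_⟩
      induction v using TensorProduct.induction_on with
      | zero => simp [lCoefMap]
      | add v₁ v₂ h₁ h₂ => simp [map_add, mul_add, add_mul, lCoefMap_add, h₁, h₂]
      | tmul a b =>
        rw [leg23_tmul, leg12_tmul, leg23_tmul, Algebra.TensorProduct.tmul_mul_tmul,
          Algebra.TensorProduct.tmul_mul_tmul, Algebra.TensorProduct.tmul_mul_tmul,
          Algebra.TensorProduct.tmul_mul_tmul, fMap_tmul, lCoefMap_tmul]
        simp only [one_mul, mul_one, LinearMap.smul_apply, LinearMap.comp_apply,
          LinearMap.mulLeft_apply, LinearMap.mulRight_apply, smul_eq_mul]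
        rw [mul_comm]

lemma gMap_mid (φ ψ : Module.Dual k A) (u w : A ⊗[k] A) :
    ∃ χ : Module.Dual k A, ∀ v : A ⊗[k] A,
      gMap φ ψ (leg12 k A u * leg23 k A v * leg12 k A w) = rCoefMap v χ := by
  induction u using TensorProduct.induction_on with
  | zero => exact ⟨0, fun v => by simp [rCoefMap]⟩
  | add u₁ u₂ h₁ h₂ =>
    obtain ⟨χ₁, hχ₁⟩ := h₁; obtain ⟨χ₂, hχ₂⟩ := h₂
    exact ⟨χ₁ + χ₂, fun v => by
      simp [map_add, add_mul, hχ₁ v, hχ₂ v]⟩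
  | tmul p q =>
    induction w using TensorProduct.induction_on with
    | zero => exact ⟨0, fun v => by simp [rCoefMap]⟩
    | add w₁ w₂ h₁ h₂ =>
      obtain ⟨χ₁, hχ₁⟩ := h₁; obtain ⟨χ₂, hχ₂⟩ := h₂
      exact ⟨χ₁ + χ₂, fun v => by
        simp [map_add, mul_add, hχ₁ v, hχ₂ v]⟩
    | tmul s t =>
      refine ⟨φ (p * s) • (ψ ∘ₗ ((LinearMap.mulRight k t) ∘ₗ (LinearMap.mulLeft k q))),
        fun v => ?_⟩
      induction v using TensorProduct.induction_on with
      | zero => simp [rCoefMap]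
      | add v₁ v₂ h₁ h₂ => simp [map_add, mul_add, add_mul, rCoefMap_add, h₁, h₂]
      | tmul a b =>
        rw [leg12_tmul, leg23_tmul, leg12_tmul, Algebra.TensorProduct.tmul_mul_tmul,
          Algebra.TensorProduct.tmul_mul_tmul, Algebra.TensorProduct.tmul_mul_tmul,
          Algebra.TensorProduct.tmul_mul_tmul, gMap_tmul, rCoefMap_tmul]
        simp only [one_mul, mul_one, LinearMap.smul_apply, LinearMap.comp_apply,
          LinearMap.mulLeft_apply, LinearMap.mulRight_apply, smul_eq_mul]

lemma kMap_mid (φ : Module.Dual k A) (u v w : A ⊗[k] A) :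
    kMap φ (leg12 k A u * leg23 k A v * leg12 k A w) =
      u * ((1:A) ⊗ₜ[k] lCoefMap v φ) * w := by
  induction u using TensorProduct.induction_on with
  | zero => simp
  | add u₁ u₂ h₁ h₂ => simp [map_add, add_mul, h₁, h₂]
  | tmul p q =>
    induction v using TensorProduct.induction_on with
    | zero => simp [lCoefMap]
    | add v₁ v₂ h₁ h₂ =>
      simp only [map_add, mul_add, add_mul, lCoefMap_add, tmul_add] at *
      rw [h₁, h₂]
    | tmul a b =>
      induction w using TensorProduct.induction_on with
      | zero => simp
      | add w₁ w₂ h₁ h₂ => simp [map_add, mul_add, h₁, h₂]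
      | tmul s t =>
        rw [leg12_tmul, leg23_tmul, leg12_tmul, Algebra.TensorProduct.tmul_mul_tmul,
          Algebra.TensorProduct.tmul_mul_tmul, Algebra.TensorProduct.tmul_mul_tmul,
          Algebra.TensorProduct.tmul_mul_tmul, kMap_tmul, lCoefMap_tmul,
          Algebra.TensorProduct.tmul_mul_tmul, Algebra.TensorProduct.tmul_mul_tmul]
        simp only [one_mul, mul_one]
        rw [mul_smul_comm, smul_mul_assoc, tmul_smul]

lemma k'Map_mid (φ : Module.Dual k A) (u v w : A ⊗[k] A) :
    k'Map φ (leg23 k A u * leg12 k A v * leg23 k A w) =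
      u * (rCoefMap v φ ⊗ₜ[k] (1:A)) * w := by
  induction u using TensorProduct.induction_on with
  | zero => simp
  | add u₁ u₂ h₁ h₂ => simp [map_add, add_mul, h₁, h₂]
  | tmul p q =>
    induction v using TensorProduct.induction_on with
    | zero => simp [rCoefMap]
    | add v₁ v₂ h₁ h₂ =>
      simp only [map_add, mul_add, add_mul, rCoefMap_add, add_tmul] at *
      rw [h₁, h₂]
    | tmul a b =>
      induction w using TensorProduct.induction_on with
      | zero => simp
      | add w₁ w₂ h₁ h₂ => simp [map_add, mul_add, h₁, h₂]
      | tmul s t =>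
        rw [leg23_tmul, leg12_tmul, leg23_tmul, Algebra.TensorProduct.tmul_mul_tmul,
          Algebra.TensorProduct.tmul_mul_tmul, Algebra.TensorProduct.tmul_mul_tmul,
          Algebra.TensorProduct.tmul_mul_tmul, k'Map_tmul, rCoefMap_tmul,
          Algebra.TensorProduct.tmul_mul_tmul, Algebra.TensorProduct.tmul_mul_tmul]
        simp only [one_mul, mul_one]
        rw [mul_smul_comm, smul_mul_assoc, ← TensorProduct.smul_tmul']

lemma kMap_13_23 (φ : Module.Dual k A) (a b : A) (v : A ⊗[k] A) :
    kMap φ (leg13 k A (a ⊗ₜ[k] b) * leg23 k A v) =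
      a ⊗ₜ[k] lCoefMap v (φ ∘ₗ LinearMap.mulLeft k b) := by
  induction v using TensorProduct.induction_on with
  | zero => simp [lCoefMap]
  | add v₁ v₂ h₁ h₂ => simp [map_add, mul_add, lCoefMap_add, tmul_add, h₁, h₂]
  | tmul s t =>
    rw [leg13_tmul, leg23_tmul, Algebra.TensorProduct.tmul_mul_tmul,
      Algebra.TensorProduct.tmul_mul_tmul, kMap_tmul, lCoefMap_tmul]
    simp only [one_mul, mul_one, LinearMap.comp_apply, LinearMap.mulLeft_apply]
    rw [TensorProduct.smul_tmul', tmul_smul]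
    rfl

lemma k'Map_12_13 (φ : Module.Dual k A) (a b : A) (v : A ⊗[k] A) :
    k'Map φ (leg12 k A v * leg13 k A (a ⊗ₜ[k] b)) =
      rCoefMap v (φ ∘ₗ LinearMap.mulRight k a) ⊗ₜ[k] b := by
  induction v using TensorProduct.induction_on with
  | zero => simp [rCoefMap]
  | add v₁ v₂ h₁ h₂ => simp [map_add, add_mul, rCoefMap_add, add_tmul, h₁, h₂]
  | tmul s t =>
    rw [leg12_tmul, leg13_tmul, Algebra.TensorProduct.tmul_mul_tmul,
      Algebra.TensorProduct.tmul_mul_tmul, k'Map_tmul, rCoefMap_tmul]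
    simp only [one_mul, mul_one, LinearMap.comp_apply, LinearMap.mulRight_apply]
    rw [TensorProduct.smul_tmul']

end Core

/-- **Statement 3.** For a unitary invertible solution `R` of the pentagon equation, the
coefficient spaces `P = R_(l)` and `H = R_(r)` are unital subalgebras of `A`, `R ∈ P ⊗ H`,
and `Δ_r(P) ⊆ P ⊗ P`, `Δ_l(H) ⊆ H ⊗ H`. -/
theorem coefficient_spaces_are_subalgebras
    {k : Type u} [Field k] {A : Type v} [Ring A] [Algebra k A]
    (R : A ⊗[k] A) (hinv : IsUnit R) (hpent : IsPentagon R) (huni : IsUnitary R) :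
    (1 : A) ∈ lCoefs R ∧
    (∀ x ∈ lCoefs R, ∀ y ∈ lCoefs R, x * y ∈ lCoefs R) ∧
    (1 : A) ∈ rCoefs R ∧
    (∀ x ∈ rCoefs R, ∀ y ∈ rCoefs R, x * y ∈ rCoefs R) ∧
    R ∈ LinearMap.range
      (TensorProduct.map (lCoefs R).subtype (rCoefs R).subtype) ∧
    (∀ x ∈ lCoefs R, deltaR R x ∈ LinearMap.range
      (TensorProduct.map (lCoefs R).subtype (lCoefs R).subtype)) ∧
    (∀ y ∈ rCoefs R, deltaL R y ∈ LinearMap.range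
      (TensorProduct.map (rCoefs R).subtype (rCoefs R).subtype)) := by
  classical
  set S := Ring.inverse R with hSdef
  have hp : leg12 k A R * leg13 k A R * leg23 k A R = leg23 k A R * leg12 k A R := hpent
  have h1 : leg23 k A R * leg23 k A S = 1 := by
    rw [← map_mul, Ring.mul_inverse_cancel R hinv, map_one]
  have h2 : leg12 k A S * leg12 k A R = 1 := by
    rw [← map_mul, Ring.inverse_mul_cancel R hinv, map_one]
  have h12 : leg12 k A R * leg13 k A R = leg23 k A R * leg12 k A R * leg23 k A S := by
    calc leg12 k A R * leg13 k A R
        = leg12 k A R * leg13 k A R * (leg23 k A R * leg23 k A S) := by rw [h1, mul_one]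
      _ = leg12 k A R * leg13 k A R * leg23 k A R * leg23 k A S := by
          rw [mul_assoc (leg12 k A R * leg13 k A R)]
      _ = leg23 k A R * leg12 k A R * leg23 k A S := by rw [hp]
  have h13 : leg13 k A R * leg23 k A R = leg12 k A S * leg23 k A R * leg12 k A R := by
    calc leg13 k A R * leg23 k A R
        = (leg12 k A S * leg12 k A R) * (leg13 k A R * leg23 k A R) := by rw [h2, one_mul]
      _ = leg12 k A S * (leg12 k A R * leg13 k A R * leg23 k A R) := by
          rw [mul_assoc, ← mul_assoc (leg12 k A R)]
      _ = leg12 k A S * (leg23 k A R * leg12 k A R) := by rw [hp]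
      _ = leg12 k A S * leg23 k A R * leg12 k A R := by rw [mul_assoc]
  obtain ⟨n, aR, bR, hrep, haR, hbR⟩ := exists_rep R
  refine ⟨huni.1, ?_, huni.2, ?_, ?_, ?_, ?_⟩
  · -- P is closed under multiplication
    rintro x ⟨φ, rfl⟩ y ⟨ψ, rfl⟩
    obtain ⟨χ, hχ⟩ := fMap_mid φ ψ R S
    refine ⟨χ, ?_⟩
    rw [← hχ R, ← h12, fMap_mul12_13]
  · -- H is closed under multiplication
    rintro x ⟨φ, rfl⟩ y ⟨ψ, rfl⟩
    obtain ⟨χ, hχ⟩ := gMap_mid φ ψ S R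
    refine ⟨χ, ?_⟩
    rw [← hχ R, ← h13, gMap_mul13_23]
  · -- R ∈ P ⊗ H
    refine ⟨∑ i, (⟨aR i, haR i⟩ : lCoefs R) ⊗ₜ[k] (⟨bR i, hbR i⟩ : rCoefs R), ?_⟩
    rw [map_sum]
    simp only [TensorProduct.map_tmul, Submodule.coe_subtype]
    exact hrep.symm
  · -- Δ_r(P) ⊆ P ⊗ P
    rintro x ⟨φ, rfl⟩
    have e0 : deltaR R (lCoefMap R φ) = S * ((1:A) ⊗ₜ[k] lCoefMap R φ) * R := rfl
    have e1 : deltaR R (lCoefMap R φ) = kMap φ (leg13 k A R * leg23 k A R) := by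
      rw [e0, ← kMap_mid φ S R R, ← h13]
    have e2 : ∀ v : A ⊗[k] A, kMap φ (leg13 k A R * leg23 k A v)
        = ∑ i, aR i ⊗ₜ[k] lCoefMap v (φ ∘ₗ LinearMap.mulLeft k (bR i)) := by
      intro v
      conv_lhs => rw [hrep]
      rw [map_sum, Finset.sum_mul, map_sum]
      exact Finset.sum_congr rfl fun i _ => kMap_13_23 φ (aR i) (bR i) v
    rw [e1, e2 R]
    refine Submodule.sum_mem _ fun i _ => ?_
    exact ⟨(⟨aR i, haR i⟩ : lCoefs R) ⊗ₜ[k]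
      (⟨lCoefMap R (φ ∘ₗ LinearMap.mulLeft k (bR i)),
        ⟨φ ∘ₗ LinearMap.mulLeft k (bR i), rfl⟩⟩ : lCoefs R),
      by simp [TensorProduct.map_tmul]⟩
  · -- Δ_l(H) ⊆ H ⊗ H
    rintro y ⟨φ, rfl⟩
    have e0 : deltaL R (rCoefMap R φ) = R * (rCoefMap R φ ⊗ₜ[k] (1:A)) * S := rfl
    have e1 : deltaL R (rCoefMap R φ) = k'Map φ (leg12 k A R * leg13 k A R) := by
      rw [e0, ← k'Map_mid φ R R S, h12]
    have e2 : ∀ v : A ⊗[k] A, k'Map φ (leg12 k A v * leg13 k A R)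
        = ∑ i, rCoefMap v (φ ∘ₗ LinearMap.mulRight k (aR i)) ⊗ₜ[k] bR i := by
      intro v
      conv_lhs => rw [hrep]
      rw [map_sum, Finset.mul_sum, map_sum]
      exact Finset.sum_congr rfl fun i _ => k'Map_12_13 φ (aR i) (bR i) v
    rw [e1, e2 R]
    refine Submodule.sum_mem _ fun i _ => ?_
    exact ⟨(⟨rCoefMap R (φ ∘ₗ LinearMap.mulRight k (aR i)),
        ⟨φ ∘ₗ LinearMap.mulRight k (aR i), rfl⟩⟩ : rCoefs R) ⊗ₜ[k]
      (⟨bR i, hbR i⟩ : rCoefs R),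
      by simp [TensorProduct.map_tmul]⟩

end PentagonPaper
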